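/- arXiv:1407.3906 — 3 statements merged into one kernel-verified Lean document; each statement's English description precedes it below -/
import Mathlib

section
/- Let (M,d,μ) be a doubling metric measure space, let p ∈ [1,∞) and η > 0, and let f ∈ L^p_loc(M,μ). Then there is a constant C, depending only on the doubling constant, p and η, such that for every ball B and all Lebesgue points x, y of f lying in B one has |f(x) − f(y)| ≤ C d(x,y)^η · sup_{B̃ ⊆ 6B} r(B̃)^{−η} · p-osc_{B̃}(f), where the supremum is over all balls B̃ contained in 6B and r(B̃) denotes the radius of B̃. Equivalently, the Hölder seminorm ess sup_{x,y ∈ B, x≠y} |f(x)−f(y)|/d(x,y)^η is bounded by C · sup_{B̃ ⊆ 6B} r(B̃)^{−η} p-osc_{B̃}(f). (Morrey–Campanato embedding, Lemma 3.3 of the paper.) -/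
open MeasureTheory Metric

/-- The `L^p` oscillation of `f` over the set `B`:
`p-osc_B(f) = (⨍_B |f - ⨍_B f dμ|^p dμ)^(1/p)`. -/
noncomputable def posc {M : Type*} [MeasurableSpace M] (μ : Measure M) (p : ℝ)
    (B : Set M) (f : M → ℝ) : ℝ :=
  (⨍ y in B, |f y - ⨍ z in B, f z ∂μ| ^ p ∂μ) ^ (1 / p)

/-- `(M, d, μ)` is doubling with constant `C_D`. -/
def IsDoublingWith {M : Type*} [PseudoMetricSpace M] [MeasurableSpace M]
    (μ : Measure M) (C_D : ℝ) : Prop :=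
  ∀ (x : M) (r : ℝ), 0 < r → μ (ball x (2 * r)) ≤ ENNReal.ofReal C_D * μ (ball x r)

/-- `x` is a Lebesgue point of `f`:  `⨍_{B(x,r)} |f - f(x)| dμ → 0` as `r → 0⁺`. -/
def LebesguePt {M : Type*} [PseudoMetricSpace M] [MeasurableSpace M]
    (μ : Measure M) (f : M → ℝ) (x : M) : Prop :=
  Filter.Tendsto (fun r : ℝ => ⨍ y in ball x r, |f y - f x| ∂μ)
    (nhdsWithin 0 (Set.Ioi 0)) (nhds 0)

section Aux
open Set
variable {M : Type*} [MeasurableSpace M] (μ : Measure M)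

lemma jensen_avg {B : Set M} (hB0 : μ B ≠ 0) (hBfin : μ B ≠ ⊤) {p : ℝ} (hp : 1 ≤ p)
    {g : M → ℝ} (hg : MemLp g (ENNReal.ofReal p) (μ.restrict B)) :
    ⨍ y in B, |g y| ∂μ ≤ (⨍ y in B, |g y| ^ p ∂μ) ^ (1 / p) := by
  have hp0 : 0 < p := lt_of_lt_of_le zero_lt_one hp
  haveI : IsFiniteMeasure (μ.restrict B) :=
    ⟨by rwa [Measure.restrict_apply_univ, lt_top_iff_ne_top]⟩
  haveI : NeZero (μ.restrict B) := ⟨fun h => hB0 (Measure.restrict_eq_zero.mp h)⟩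
  have hg1 : (1 : ENNReal) ≤ ENNReal.ofReal p := by
    rw [ENNReal.one_le_ofReal]; exact hp
  have hint : Integrable g (μ.restrict B) := hg.integrable hg1
  have hintp : Integrable (fun y => |g y| ^ p) (μ.restrict B) := by
    have := hg.integrable_norm_rpow (by simp [ENNReal.ofReal_eq_zero]; linarith)
      ENNReal.ofReal_ne_top
    simpa [ENNReal.toReal_ofReal hp0.le, Real.norm_eq_abs] using this
  have hc : ContinuousOn (fun t : ℝ => t ^ p) (Ici 0) :=
    fun t _ => (Real.continuousAt_rpow_const t p (Or.inr hp0.le)).continuousWithinAt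
  have key : (⨍ y in B, |g y| ∂μ) ^ p ≤ ⨍ y in B, |g y| ^ p ∂μ :=
    (convexOn_rpow hp).map_average_le hc isClosed_Ici
      (Filter.Eventually.of_forall fun y => Set.mem_Ici.mpr (abs_nonneg _)) hint.abs hintp
  have h0 : 0 ≤ ⨍ y in B, |g y| ∂μ := by
    rw [setAverage_eq]
    exact smul_nonneg (by positivity) (integral_nonneg fun y => abs_nonneg _)
  calc ⨍ y in B, |g y| ∂μ = ((⨍ y in B, |g y| ∂μ) ^ p) ^ (1/p) := by
        rw [one_div, Real.rpow_rpow_inv h0 hp0.ne']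
    _ ≤ (⨍ y in B, |g y| ^ p ∂μ) ^ (1/p) :=
        Real.rpow_le_rpow (Real.rpow_nonneg h0 p) key (by positivity)

lemma abs_avg_sub_le {B : Set M} (hB0 : μ B ≠ 0) (hBfin : μ B ≠ ⊤) {f : M → ℝ}
    (hfi : IntegrableOn f B μ) (c : ℝ) :
    |⨍ y in B, f y ∂μ - c| ≤ ⨍ y in B, |f y - c| ∂μ := by
  have ha : 0 < (μ B).toReal := ENNReal.toReal_pos hB0 hBfin
  have h1 : ⨍ y in B, f y ∂μ - c = ⨍ y in B, (f y - c) ∂μ := by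
    rw [setAverage_eq, setAverage_eq, smul_eq_mul, smul_eq_mul,
      integral_sub hfi (integrableOn_const hBfin),
      setIntegral_const, smul_eq_mul]
    field_simp [show μ.real B ≠ 0 from ha.ne']
  rw [h1, setAverage_eq, setAverage_eq, smul_eq_mul, smul_eq_mul, abs_mul, abs_inv,
    abs_of_nonneg measureReal_nonneg]
  exact mul_le_mul_of_nonneg_left (by simpa [Real.norm_eq_abs] using norm_integral_le_integral_norm (μ := μ.restrict B) (fun y => f y - c)) (by positivity)

lemma avg_abs_mono {B' B : Set M} (hsub : B' ⊆ B) (hB'0 : μ B' ≠ 0) (hBfin : μ B ≠ ⊤)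
    {κ : ℝ} (hκ : μ B ≤ ENNReal.ofReal κ * μ B')
    {g : M → ℝ} (hi : IntegrableOn (fun y => |g y|) B μ) :
    ⨍ y in B', |g y| ∂μ ≤ κ * ⨍ y in B, |g y| ∂μ := by
  have hB0 : μ B ≠ 0 := fun h => hB'0 (measure_mono_null hsub h)
  have hB'fin : μ B' ≠ ⊤ := (lt_of_le_of_lt (measure_mono hsub) hBfin.lt_top).ne
  have hκ0 : 0 ≤ κ := by
    by_contra h
    push_neg at h
    rw [ENNReal.ofReal_eq_zero.mpr h.le, zero_mul, nonpos_iff_eq_zero] at hκ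
    exact hB0 hκ
  have ha : 0 < (μ B').toReal := ENNReal.toReal_pos hB'0 hB'fin
  have hb : 0 < (μ B).toReal := ENNReal.toReal_pos hB0 hBfin
  have htR : (μ B).toReal ≤ κ * (μ B').toReal := by
    have h := ENNReal.toReal_mono
      (by exact ENNReal.mul_ne_top ENNReal.ofReal_ne_top hB'fin) hκ
    rwa [ENNReal.toReal_mul, ENNReal.toReal_ofReal hκ0] at h
  have h1 : ∫ y in B', |g y| ∂μ ≤ ∫ y in B, |g y| ∂μ :=
    setIntegral_mono_set hi (Filter.Eventually.of_forall fun y => abs_nonneg _)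
      (HasSubset.Subset.eventuallyLE hsub)
  have hI : 0 ≤ ∫ y in B, |g y| ∂μ := integral_nonneg fun y => abs_nonneg _
  have h3 : (μ B').toReal⁻¹ ≤ κ * (μ B).toReal⁻¹ := by
    rw [inv_eq_one_div, inv_eq_one_div, mul_one_div, div_le_div_iff₀ ha hb]
    linarith
  rw [setAverage_eq, setAverage_eq, smul_eq_mul, smul_eq_mul]
  calc (μ B').toReal⁻¹ * ∫ y in B', |g y| ∂μ
      ≤ (μ B').toReal⁻¹ * ∫ y in B, |g y| ∂μ :=
        mul_le_mul_of_nonneg_left h1 (by positivity)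
    _ ≤ (κ * (μ B).toReal⁻¹) * ∫ y in B, |g y| ∂μ := mul_le_mul_of_nonneg_right h3 hI
    _ = κ * ((μ B).toReal⁻¹ * ∫ y in B, |g y| ∂μ) := by ring

lemma avg_sub_avg_le_posc {p : ℝ} (hp : 1 ≤ p) {B' B : Set M} (hsub : B' ⊆ B)
    (hB'0 : μ B' ≠ 0) (hBfin : μ B ≠ ⊤)
    {κ : ℝ} (hκ : μ B ≤ ENNReal.ofReal κ * μ B')
    {f : M → ℝ} (hfB : MemLp f (ENNReal.ofReal p) (μ.restrict B)) :
    |⨍ y in B', f y ∂μ - ⨍ y in B, f y ∂μ| ≤ κ * posc μ p B f := by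
  have hB0 : μ B ≠ 0 := fun h => hB'0 (measure_mono_null hsub h)
  have hB'fin : μ B' ≠ ⊤ := (lt_of_le_of_lt (measure_mono hsub) hBfin.lt_top).ne
  have hg1 : (1 : ENNReal) ≤ ENNReal.ofReal p := by
    rw [ENNReal.one_le_ofReal]; exact hp
  haveI : IsFiniteMeasure (μ.restrict B) :=
    ⟨by rwa [Measure.restrict_apply_univ, lt_top_iff_ne_top]⟩
  set c := ⨍ y in B, f y ∂μ with hc
  have hgB : MemLp (fun y => f y - c) (ENNReal.ofReal p) (μ.restrict B) :=
    hfB.sub (memLp_const c)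
  have hiB : IntegrableOn (fun y => |f y - c|) B μ := (hgB.integrable hg1).abs
  have hiB' : IntegrableOn f B' μ :=
    IntegrableOn.mono_set (hfB.integrable hg1) hsub
  calc |⨍ y in B', f y ∂μ - c| ≤ ⨍ y in B', |f y - c| ∂μ :=
        abs_avg_sub_le μ hB'0 hB'fin hiB' c
    _ ≤ κ * ⨍ y in B, |f y - c| ∂μ := avg_abs_mono μ hsub hB'0 hBfin hκ hiB
    _ ≤ κ * posc μ p B f := by
        have hκ0 : 0 ≤ κ := by
          by_contra h
          push_neg at h
          rw [ENNReal.ofReal_eq_zero.mpr h.le, zero_mul, nonpos_iff_eq_zero] at hκ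
          exact hB0 hκ
        exact mul_le_mul_of_nonneg_left (jensen_avg μ hB0 hBfin hp hgB) hκ0

end Aux

lemma chain_lemma {M : Type*} [MetricSpace M] [MeasurableSpace M] (μ : Measure M)
    {C_D : ℝ} (hC_D : 1 ≤ C_D) (hdoub : IsDoublingWith μ C_D)
    (hμ : ∀ (x : M) (r : ℝ), 0 < r → 0 < μ (ball x r) ∧ μ (ball x r) < ⊤)
    {p : ℝ} (hp : 1 ≤ p) {η : ℝ} (hη : 0 < η)
    {f : M → ℝ}
    (hf : ∀ (z : M) (ρ : ℝ), 0 < ρ → MemLp f (ENNReal.ofReal p) (μ.restrict (ball z ρ)))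
    {x : M} (hx : LebesguePt μ f x) {r : ℝ} (hr : 0 < r) {K : ℝ} (hK0 : 0 ≤ K)
    (hK : ∀ ρ, 0 < ρ → ρ ≤ r → posc μ p (ball x ρ) f ≤ K * ρ ^ η) :
    |f x - ⨍ y in ball x r, f y ∂μ| ≤ (C_D * K * r ^ η) * (1 - (1/2:ℝ) ^ η)⁻¹ := by
  have hq0 : (0:ℝ) ≤ (1/2:ℝ) ^ η := Real.rpow_nonneg (by norm_num) η
  have hq1 : (1/2:ℝ) ^ η < 1 := Real.rpow_lt_one (by norm_num) (by norm_num) hη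
  set u : ℕ → ℝ := fun k => ⨍ y in ball x (r * (1/2)^k), f y ∂μ with hu
  have hrk : ∀ k : ℕ, 0 < r * (1/2:ℝ)^k := fun k => by positivity
  have epow : ∀ k : ℕ, (((1/2:ℝ))^k)^η = ((1/2:ℝ)^η)^k := fun k => by
    rw [← Real.rpow_natCast (1/2:ℝ) k, ← Real.rpow_mul (by norm_num), mul_comm,
      Real.rpow_mul (by norm_num), Real.rpow_natCast]
  have hstep : ∀ k : ℕ, dist (u k) (u (k+1)) ≤ (C_D * K * r ^ η) * ((1/2:ℝ)^η)^k := by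
    intro k
    set ρ := r * (1/2:ℝ)^k with hρdef
    have hρ : 0 < ρ := hrk k
    have hhalf : r * (1/2:ℝ)^(k+1) = ρ / 2 := by rw [hρdef, pow_succ]; ring
    have hsub : ball x (r * (1/2:ℝ)^(k+1)) ⊆ ball x ρ :=
      ball_subset_ball (by rw [hhalf]; linarith)
    have hκ : μ (ball x ρ) ≤ ENNReal.ofReal C_D * μ (ball x (r * (1/2:ℝ)^(k+1))) := by
      have h2 := hdoub x (r * (1/2:ℝ)^(k+1)) (hrk (k+1))
      rwa [show 2 * (r * (1/2:ℝ)^(k+1)) = ρ by rw [hhalf]; ring] at h2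
    have hbound := avg_sub_avg_le_posc μ hp hsub (hμ x _ (hrk (k+1))).1.ne'
      (hμ x ρ hρ).2.ne hκ (hf x ρ hρ)
    have hρler : ρ ≤ r := by
      have h2 : (1/2:ℝ)^k ≤ 1 := pow_le_one₀ (by norm_num) (by norm_num)
      rw [hρdef]
      nlinarith
    have hposc : posc μ p (ball x ρ) f ≤ K * ρ ^ η := hK ρ hρ hρler
    have hρη : ρ ^ η = r ^ η * ((1/2:ℝ)^η)^k := by
      rw [hρdef, Real.mul_rpow hr.le (by positivity), epow k]
    rw [dist_comm, Real.dist_eq]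
    calc |u (k+1) - u k| ≤ C_D * posc μ p (ball x ρ) f := hbound
      _ ≤ C_D * (K * ρ ^ η) :=
          mul_le_mul_of_nonneg_left hposc (by linarith)
      _ = (C_D * K * r ^ η) * ((1/2:ℝ)^η)^k := by rw [hρη]; ring
  have hsum : Summable (fun k : ℕ => (C_D * K * r ^ η) * ((1/2:ℝ)^η)^k) :=
    (summable_geometric_of_lt_one hq0 hq1).mul_left _
  have htend : Filter.Tendsto u Filter.atTop (nhds (f x)) := by
    have hrad : Filter.Tendsto (fun k : ℕ => r * (1/2:ℝ)^k) Filter.atTop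
        (nhdsWithin 0 (Set.Ioi 0)) := by
      apply tendsto_nhdsWithin_of_tendsto_nhds_of_eventually_within
      · have := (tendsto_pow_atTop_nhds_zero_of_lt_one (by norm_num : (0:ℝ) ≤ 1/2)
          (by norm_num : (1/2:ℝ) < 1)).const_mul r
        simpa using this
      · exact Filter.Eventually.of_forall fun k => hrk k
    have h2 := hx.comp hrad
    rw [tendsto_iff_dist_tendsto_zero]
    refine squeeze_zero (fun k => dist_nonneg) (fun k => ?_)
      (by simpa only [Function.comp_def] using h2)
    haveI : IsFiniteMeasure (μ.restrict (ball x (r * (1/2:ℝ)^k))) :=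
      ⟨by rw [Measure.restrict_apply_univ]; exact (hμ x _ (hrk k)).2⟩
    have hint : IntegrableOn f (ball x (r * (1/2:ℝ)^k)) μ :=
      (hf x _ (hrk k)).integrable (by rw [ENNReal.one_le_ofReal]; exact hp)
    rw [Real.dist_eq]
    exact abs_avg_sub_le μ (hμ x _ (hrk k)).1.ne' (hμ x _ (hrk k)).2.ne hint (f x)
  have hfinal := dist_le_tsum_of_dist_le_of_tendsto₀ _ hstep hsum htend
  have htsum : ∑' k : ℕ, (C_D * K * r ^ η) * ((1/2:ℝ)^η)^k
      = (C_D * K * r ^ η) * (1 - (1/2:ℝ)^η)⁻¹ := by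
    rw [tsum_mul_left, tsum_geometric_of_lt_one hq0 hq1]
  rw [htsum] at hfinal
  have hu0 : u 0 = ⨍ y in ball x r, f y ∂μ := by simp [hu]
  rw [Real.dist_eq, hu0] at hfinal
  rwa [abs_sub_comm]

lemma posc_nonneg {M : Type*} [MeasurableSpace M] (μ : Measure M) (p : ℝ)
    (B : Set M) (f : M → ℝ) : 0 ≤ posc μ p B f := by
  apply Real.rpow_nonneg
  rw [setAverage_eq]
  exact smul_nonneg (by positivity)
    (integral_nonneg fun y => Real.rpow_nonneg (abs_nonneg _) _)

/-- **Morrey–Campanato embedding** (Lemma 3.3).  On a doubling metric measure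
space, for `p ∈ [1,∞)` and `η > 0`, there is a constant `C` (depending only on
the doubling constant, `p` and `η`) such that for every `f ∈ L^p_loc`, every
ball `B = B(x₀, R)`, all Lebesgue points `x, y ∈ B` of `f`, and every upper
bound `K` for `r(B̃)^{-η} · p-osc_{B̃}(f)` over all balls `B̃ ⊆ 6B`, one has
`|f x - f y| ≤ C · d(x,y)^η · K`. -/
theorem morrey_campanato_embedding
    {M : Type*} [MetricSpace M] [MeasurableSpace M] [BorelSpace M]
    (μ : Measure M) (C_D : ℝ) (hC_D : 1 ≤ C_D) (hdoub : IsDoublingWith μ C_D)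
    (hμ : ∀ (x : M) (r : ℝ), 0 < r → 0 < μ (ball x r) ∧ μ (ball x r) < ⊤)
    (p : ℝ) (hp : 1 ≤ p) (η : ℝ) (hη : 0 < η) :
    ∃ C : ℝ, 0 < C ∧ ∀ f : M → ℝ,
      (∀ (z : M) (ρ : ℝ), 0 < ρ → MemLp f (ENNReal.ofReal p) (μ.restrict (ball z ρ))) →
      ∀ (x₀ : M) (R : ℝ), 0 < R →
      ∀ x ∈ ball x₀ R, ∀ y ∈ ball x₀ R,
      LebesguePt μ f x → LebesguePt μ f y →
      ∀ K : ℝ,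
        (∀ (z : M) (ρ : ℝ), 0 < ρ → ball z ρ ⊆ ball x₀ (6 * R) →
          posc μ p (ball z ρ) f ≤ K * ρ ^ η) →
        |f x - f y| ≤ C * dist x y ^ η * K := by
  have hq0 : (0:ℝ) ≤ (1/2:ℝ) ^ η := Real.rpow_nonneg (by norm_num) η
  have hq1 : (1/2:ℝ) ^ η < 1 := Real.rpow_lt_one (by norm_num) (by norm_num) hη
  have hqpos : 0 < 1 - (1/2:ℝ) ^ η := by linarith
  have h2η : (0:ℝ) < (2:ℝ) ^ η := Real.rpow_pos_of_pos (by norm_num) η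
  refine ⟨2 * C_D * (1 - (1/2:ℝ)^η)⁻¹ + (2:ℝ)^η * (C_D + C_D^2), ?_, ?_⟩
  · have h1 : 0 < 2 * C_D * (1 - (1/2:ℝ)^η)⁻¹ := by
      have := inv_pos.mpr hqpos
      nlinarith
    nlinarith
  intro f hf x₀ R hR x hx y hy hLx hLy K hK
  -- K is nonnegative
  have hK0 : 0 ≤ K := by
    have h6 : ball x₀ R ⊆ ball x₀ (6 * R) := ball_subset_ball (by linarith)
    have h := hK x₀ R hR h6
    have hRη : 0 < R ^ η := Real.rpow_pos_of_pos hR η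
    have h0 := posc_nonneg μ p (ball x₀ R) f
    by_contra hc
    push_neg at hc
    nlinarith
  rcases eq_or_lt_of_le (dist_nonneg (x := x) (y := y)) with hd0 | hd
  · -- x = y
    have hxy : x = y := by rwa [eq_comm, dist_eq_zero] at hd0
    subst hxy
    simp [dist_self, Real.zero_rpow hη.ne']
  set d := dist x y with hddef
  have hxx₀ : dist x x₀ < R := mem_ball.mp hx
  have hyx₀ : dist y x₀ < R := mem_ball.mp hy
  have hd2R : d < 2 * R := by
    have := dist_triangle x x₀ y
    rw [hddef]
    calc dist x y ≤ dist x x₀ + dist x₀ y := this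
      _ = dist x x₀ + dist y x₀ := by rw [dist_comm x₀ y]
      _ < 2 * R := by linarith
  have h2d : 0 < 2 * d := by linarith
  -- chains at x and y
  have hKx : ∀ ρ, 0 < ρ → ρ ≤ d → posc μ p (ball x ρ) f ≤ K * ρ ^ η := by
    intro ρ hρ hρd
    refine hK x ρ hρ fun z hz => ?_
    rw [mem_ball] at hz ⊢
    have := dist_triangle z x x₀
    linarith
  have hKy : ∀ ρ, 0 < ρ → ρ ≤ d → posc μ p (ball y ρ) f ≤ K * ρ ^ η := by
    intro ρ hρ hρd
    refine hK y ρ hρ fun z hz => ?_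
    rw [mem_ball] at hz ⊢
    have := dist_triangle z y x₀
    linarith
  have hchainx := chain_lemma μ hC_D hdoub hμ hp hη hf hLx hd hK0 hKx
  have hchainy := chain_lemma μ hC_D hdoub hμ hp hη hf hLy hd hK0 hKy
  set a := ⨍ z in ball x d, f z ∂μ
  set b := ⨍ z in ball x (2*d), f z ∂μ
  set c := ⨍ z in ball y d, f z ∂μ
  -- posc bound on the big ball
  have hposcbig : posc μ p (ball x (2*d)) f ≤ K * (2*d) ^ η := by
    refine hK x (2*d) h2d fun z hz => ?_
    rw [mem_ball] at hz ⊢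
    have := dist_triangle z x x₀
    linarith
  -- |a - b|
  have hm1 : |a - b| ≤ C_D * (K * (2*d) ^ η) := by
    have hsub : ball x d ⊆ ball x (2*d) := ball_subset_ball (by linarith)
    have hκ : μ (ball x (2*d)) ≤ ENNReal.ofReal C_D * μ (ball x d) := hdoub x d hd
    have h := avg_sub_avg_le_posc μ hp hsub (hμ x d hd).1.ne'
      (hμ x (2*d) h2d).2.ne hκ (hf x (2*d) h2d)
    calc |a - b| ≤ C_D * posc μ p (ball x (2*d)) f := h
      _ ≤ C_D * (K * (2*d) ^ η) := mul_le_mul_of_nonneg_left hposcbig (by linarith)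
  -- |c - b|
  have hm2 : |c - b| ≤ C_D^2 * (K * (2*d) ^ η) := by
    have hsub : ball y d ⊆ ball x (2*d) := fun z hz => by
      rw [mem_ball] at hz ⊢
      have := dist_triangle z y x
      have h' : dist y x = d := by rw [dist_comm]
      linarith
    have hκ : μ (ball x (2*d)) ≤ ENNReal.ofReal (C_D^2) * μ (ball y d) := by
      calc μ (ball x (2*d)) ≤ μ (ball y (4*d)) := by
            refine measure_mono fun z hz => ?_
            rw [mem_ball] at hz ⊢
            have := dist_triangle z x y
            linarith
        _ ≤ ENNReal.ofReal C_D * μ (ball y (2*d)) := by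
            have h := hdoub y (2*d) h2d
            rwa [show 2 * (2*d) = 4*d by ring] at h
        _ ≤ ENNReal.ofReal C_D * (ENNReal.ofReal C_D * μ (ball y d)) :=
            mul_le_mul_right (hdoub y d hd) _
        _ = ENNReal.ofReal (C_D^2) * μ (ball y d) := by
            rw [← mul_assoc, ← ENNReal.ofReal_mul (by linarith), ← sq]
    have h := avg_sub_avg_le_posc μ hp hsub (hμ y d hd).1.ne'
      (hμ x (2*d) h2d).2.ne hκ (hf x (2*d) h2d)
    calc |c - b| ≤ C_D^2 * posc μ p (ball x (2*d)) f := h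
      _ ≤ C_D^2 * (K * (2*d) ^ η) := mul_le_mul_of_nonneg_left hposcbig (by nlinarith)
  -- combine
  have habs : |f x - f y| ≤ |f x - a| + |a - b| + (|c - b| + |f y - c|) := by
    calc |f x - f y| ≤ |f x - b| + |b - f y| := abs_sub_le _ _ _
      _ ≤ (|f x - a| + |a - b|) + (|b - c| + |c - f y|) :=
          add_le_add (abs_sub_le _ _ _) (abs_sub_le _ _ _)
      _ = |f x - a| + |a - b| + (|c - b| + |f y - c|) := by
          rw [abs_sub_comm b c, abs_sub_comm c (f y)]
  have e2 : (2*d) ^ η = (2:ℝ)^η * d ^ η := Real.mul_rpow (by norm_num) (by positivity)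
  rw [e2] at hm1 hm2
  have hdη : 0 < d ^ η := Real.rpow_pos_of_pos hd η
  nlinarith [hchainx, hchainy, hm1, hm2, habs]
end

section
/- Let 0 < r < R and let A : [r,R] → [0,∞) satisfy A(s) ≤ C₀ (s'/s)^θ A(s') for all r ≤ s ≤ s' ≤ R, for some constants C₀ ≥ 1 and θ > 0. Let B : [r,R] → [0,∞), and assume that for some ε ∈ (0,1), γ > 0 and C₁ ≥ 1 one has A(s) ≤ C₁ [ (s'/s)^ε A(s') + (s'/s)^γ s' B(s') ] for all r ≤ s ≤ s' ≤ R. Then for every ε' ∈ (ε,1) there is a constant C, depending only on C₀, C₁, θ, ε, ε', γ (and not on r, R, A, B), such that A(r) ≤ C (R/r)^{ε'} [ A(R) + R · sup_{r ≤ u ≤ R} B(u) ]. (Iteration lemma, Lemma 5.4 of the paper.) -/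
/-- **Iteration lemma** (Lemma 5.4).  If `A : [r,R] → [0,∞)` satisfies
`A(s) ≤ C₀ (s'/s)^θ A(s')` and
`A(s) ≤ C₁ [(s'/s)^ε A(s') + (s'/s)^γ s' B(s')]` for all `r ≤ s ≤ s' ≤ R`,
then for every `ε' ∈ (ε,1)` there is `C`, depending only on
`C₀, C₁, θ, ε, ε', γ` (and not on `r, R, A, B`), such that
`A(r) ≤ C (R/r)^{ε'} [A(R) + R · sup_{r ≤ u ≤ R} B(u)]`
(the supremum being expressed through an arbitrary upper bound `S`). -/
theorem iteration_lemma
    (C₀ C₁ θ ε γ ε' : ℝ) (hC₀ : 1 ≤ C₀) (hC₁ : 1 ≤ C₁) (hθ : 0 < θ)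
    (hε : ε ∈ Set.Ioo (0 : ℝ) 1) (hγ : 0 < γ) (hε' : ε' ∈ Set.Ioo ε 1) :
    ∃ C : ℝ, 0 < C ∧ ∀ (r R : ℝ) (A B : ℝ → ℝ), 0 < r → r < R →
      (∀ s ∈ Set.Icc r R, 0 ≤ A s) →
      (∀ u ∈ Set.Icc r R, 0 ≤ B u) →
      (∀ s s' : ℝ, r ≤ s → s ≤ s' → s' ≤ R → A s ≤ C₀ * (s' / s) ^ θ * A s') →
      (∀ s s' : ℝ, r ≤ s → s ≤ s' → s' ≤ R →
        A s ≤ C₁ * ((s' / s) ^ ε * A s' + (s' / s) ^ γ * s' * B s')) →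
      ∀ S : ℝ, (∀ u ∈ Set.Icc r R, B u ≤ S) →
        A r ≤ C * (R / r) ^ ε' * (A R + R * S) := by
  obtain ⟨hε0, hε1⟩ := hε
  obtain ⟨hεε', hε'1⟩ := hε'
  have hsub : (0:ℝ) < ε' - ε := by linarith
  have hC₁0 : (0:ℝ) < C₁ := by linarith
  set q : ℝ := max 2 (C₁ ^ ((ε' - ε)⁻¹)) with hq_def
  have hq2 : (2:ℝ) ≤ q := le_max_left _ _
  have hq1 : (1:ℝ) < q := lt_of_lt_of_le one_lt_two hq2
  have hq0 : (0:ℝ) < q := by linarith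
  have hC₁q : C₁ ≤ q ^ (ε' - ε) := by
    have h1 : C₁ ^ ((ε' - ε)⁻¹) ≤ q := le_max_right _ _
    have h2 : (C₁ ^ ((ε' - ε)⁻¹)) ^ (ε' - ε) ≤ q ^ (ε' - ε) :=
      Real.rpow_le_rpow (Real.rpow_nonneg hC₁0.le _) h1 hsub.le
    calc C₁ = C₁ ^ ((ε' - ε)⁻¹ * (ε' - ε)) := by
          rw [inv_mul_cancel₀ hsub.ne', Real.rpow_one]
      _ = (C₁ ^ ((ε' - ε)⁻¹)) ^ (ε' - ε) := Real.rpow_mul hC₁0.le _ _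
      _ ≤ q ^ (ε' - ε) := h2
  set M : ℝ := C₁ * q ^ ε with hM_def
  have h2ε1 : (1:ℝ) < (2:ℝ) ^ ε :=
    (Real.one_lt_rpow_iff_of_pos two_pos).mpr (Or.inl ⟨one_lt_two, hε0⟩)
  have hqε2 : (2:ℝ) ^ ε ≤ q ^ ε := Real.rpow_le_rpow (by norm_num) hq2 hε0.le
  have hqε1 : (1:ℝ) < q ^ ε := lt_of_lt_of_le h2ε1 hqε2
  have hM1 : (1:ℝ) < M := by
    have : q ^ ε ≤ C₁ * q ^ ε := le_mul_of_one_le_left (by positivity) hC₁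
    simp only [hM_def]; linarith
  have hM0 : (0:ℝ) < M := by linarith
  have hMε' : M ≤ q ^ ε' := by
    have h : C₁ * q ^ ε ≤ q ^ (ε' - ε) * q ^ ε :=
      mul_le_mul_of_nonneg_right hC₁q (by positivity)
    calc M = C₁ * q ^ ε := hM_def
      _ ≤ q ^ (ε' - ε) * q ^ ε := h
      _ = q ^ ε' := by rw [← Real.rpow_add hq0]; ring_nf
  have hD0 : (0:ℝ) < (2:ℝ) ^ ε - 1 := by linarith
  have hMD : (2:ℝ) ^ ε - 1 ≤ M - 1 := by
    have : q ^ ε ≤ M := by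
      rw [hM_def]; exact le_mul_of_one_le_left (by positivity) hC₁
    linarith
  set Cmax : ℝ := max 1 (C₁ * q ^ γ / ((2:ℝ) ^ ε - 1)) with hCmax_def
  have hCmax1 : (1:ℝ) ≤ Cmax := le_max_left _ _
  have hCmax2 : C₁ * q ^ γ / ((2:ℝ) ^ ε - 1) ≤ Cmax := le_max_right _ _
  refine ⟨q ^ ε' * Cmax, by positivity, ?_⟩
  intro r R A B hr hrR hA0 hB0 hA₁ hA₂ S hS
  have hrR' : r ≤ R := hrR.le
  have hR0 : (0:ℝ) < R := lt_trans hr hrR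
  have hS0 : (0:ℝ) ≤ S := le_trans (hB0 R ⟨hrR', le_rfl⟩) (hS R ⟨hrR', le_rfl⟩)
  have hAR0 : (0:ℝ) ≤ A R := hA0 R ⟨hrR', le_rfl⟩
  set K : ℝ := C₁ * q ^ γ * (R * S) with hK_def
  have hK0 : (0:ℝ) ≤ K := by positivity
  -- key iteration
  have key : ∀ n : ℕ, ∀ x : ℝ, r ≤ x → x ≤ R → R ≤ x * q ^ n →
      A x ≤ M ^ n * A R + K * ∑ j ∈ Finset.range n, M ^ j := by
    intro n
    induction n with
    | zero =>
      intro x hx1 hx2 hx3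
      simp only [pow_zero, mul_one] at hx3
      have hxR : x = R := le_antisymm hx2 hx3
      simp [hxR]
    | succ n ih =>
      intro x hx1 hx2 hx3
      have hx0 : (0:ℝ) < x := lt_of_lt_of_le hr hx1
      have hsum : ∑ j ∈ Finset.range (n+1), M ^ j
          = 1 + M * ∑ j ∈ Finset.range n, M ^ j := by
        rw [geom_sum_succ]; ring
      by_cases hcase : R ≤ x * q
      · have hRx : R / x ≤ q := (div_le_iff₀ hx0).mpr (by rw [mul_comm]; exact hcase)
        have hRx0 : (0:ℝ) ≤ R / x := by positivity
        have step := hA₂ x R hx1 hx2 le_rfl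
        have h1 : (R / x) ^ ε * A R ≤ q ^ ε * A R :=
          mul_le_mul_of_nonneg_right (Real.rpow_le_rpow hRx0 hRx hε0.le) hAR0
        have hBR : B R ≤ S := hS R ⟨hrR', le_rfl⟩
        have hBR0 : 0 ≤ B R := hB0 R ⟨hrR', le_rfl⟩
        have h2 : (R / x) ^ γ * R * B R ≤ q ^ γ * (R * S) := by
          have hg : (R / x) ^ γ ≤ q ^ γ := Real.rpow_le_rpow hRx0 hRx hγ.le
          have h : (R / x) ^ γ * R * B R ≤ q ^ γ * R * S :=
            mul_le_mul (mul_le_mul_of_nonneg_right hg hR0.le) hBR hBR0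
              (by positivity)
          linarith [h]
        have hstep2 : A x ≤ M * A R + K := by
          calc A x ≤ C₁ * ((R / x) ^ ε * A R + (R / x) ^ γ * R * B R) := step
            _ ≤ C₁ * (q ^ ε * A R + q ^ γ * (R * S)) := by
                apply mul_le_mul_of_nonneg_left _ hC₁0.le
                linarith
            _ = M * A R + K := by rw [hM_def, hK_def]; ring
        have hMn : M ≤ M ^ (n+1) := le_self_pow₀ hM1.le (Nat.succ_ne_zero n)
        have hsum1 : (1:ℝ) ≤ ∑ j ∈ Finset.range (n+1), M ^ j := by
          have hnn : 0 ≤ M * ∑ j ∈ Finset.range n, M ^ j := by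
            apply mul_nonneg hM0.le
            exact Finset.sum_nonneg fun i _ => by positivity
          rw [hsum]; linarith
        calc A x ≤ M * A R + K := hstep2
          _ ≤ M ^ (n+1) * A R + K * ∑ j ∈ Finset.range (n+1), M ^ j := by
              have h3 := mul_le_mul_of_nonneg_right hMn hAR0
              have h4 := mul_le_mul_of_nonneg_left hsum1 hK0
              linarith
      · push_neg at hcase
        have hxq : x * q ≤ R := hcase.le
        have hihyp : R ≤ (x * q) * q ^ n := by
          rw [mul_assoc, ← pow_succ']
          exact hx3
        have hxxq : x ≤ x * q := le_mul_of_one_le_right hx0.le hq1.le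
        have hih := ih (x * q) (le_trans hx1 hxxq) hxq hihyp
        have step := hA₂ x (x * q) hx1 hxxq hxq
        have hxqx : x * q / x = q := by field_simp
        have hBxq : B (x * q) ≤ S := hS _ ⟨le_trans hx1 hxxq, hxq⟩
        have hBxq0 : 0 ≤ B (x * q) := hB0 _ ⟨le_trans hx1 hxxq, hxq⟩
        have hstep2 : A x ≤ M * A (x * q) + K := by
          have h2 : q ^ γ * (x * q) * B (x * q) ≤ q ^ γ * (R * S) := by
            have h : (x * q) * B (x * q) ≤ R * S :=
              mul_le_mul hxq hBxq hBxq0 hR0.le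
            calc q ^ γ * (x * q) * B (x * q)
                = q ^ γ * ((x * q) * B (x * q)) := by ring
              _ ≤ q ^ γ * (R * S) := mul_le_mul_of_nonneg_left h (by positivity)
          calc A x ≤ C₁ * (q ^ ε * A (x * q) + q ^ γ * (x * q) * B (x * q)) := by
                rw [hxqx] at step; exact step
            _ ≤ C₁ * (q ^ ε * A (x * q) + q ^ γ * (R * S)) := by
                apply mul_le_mul_of_nonneg_left _ hC₁0.le
                linarith
            _ = M * A (x * q) + K := by rw [hM_def, hK_def]; ring
        calc A x ≤ M * A (x * q) + K := hstep2
          _ ≤ M * (M ^ n * A R + K * ∑ j ∈ Finset.range n, M ^ j) + K :=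
              add_le_add_left (mul_le_mul_of_nonneg_left hih hM0.le) K
          _ = M ^ (n+1) * A R + K * (1 + M * ∑ j ∈ Finset.range n, M ^ j) := by
              ring
          _ = M ^ (n+1) * A R + K * ∑ j ∈ Finset.range (n+1), M ^ j := by
              rw [hsum]
  -- choose N
  set N : ℕ := ⌈Real.logb q (R / r)⌉₊ with hN_def
  have hRr1 : (1:ℝ) < R / r := (one_lt_div hr).mpr hrR
  have hlogb0 : 0 ≤ Real.logb q (R / r) := Real.logb_nonneg hq1 hRr1.le
  have hqN1 : R / r ≤ q ^ N := by
    have h : R / r = q ^ Real.logb q (R / r) :=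
      (Real.rpow_logb hq0 hq1.ne' (by linarith)).symm
    rw [h, ← Real.rpow_natCast q N]
    exact Real.rpow_le_rpow_of_exponent_le hq1.le (Nat.le_ceil _)
  have hqN2 : (q:ℝ) ^ N ≤ q * (R / r) := by
    have h1 : (N:ℝ) ≤ Real.logb q (R / r) + 1 := by
      have := Nat.ceil_lt_add_one hlogb0
      linarith
    calc (q:ℝ) ^ N = q ^ (N:ℝ) := (Real.rpow_natCast q N).symm
      _ ≤ q ^ (Real.logb q (R / r) + 1) :=
          Real.rpow_le_rpow_of_exponent_le hq1.le h1
      _ = q ^ Real.logb q (R / r) * q := by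
          rw [Real.rpow_add hq0, Real.rpow_one]
      _ = q * (R / r) := by
          rw [Real.rpow_logb hq0 hq1.ne' (by linarith)]; ring
  have hmain := key N r le_rfl hrR' (by
    rw [mul_comm]; exact (div_le_iff₀ hr).mp hqN1)
  have hMne : M - 1 ≠ 0 := by linarith
  have hgeom : ∑ j ∈ Finset.range N, M ^ j ≤ M ^ N / (M - 1) := by
    rw [geom_sum_eq hM1.ne' N]
    gcongr
    · linarith
  have hMN : M ^ N ≤ q ^ ε' * (R / r) ^ ε' := by
    have h1 : M ^ N ≤ (q ^ ε') ^ N := pow_le_pow_left₀ hM0.le hMε' N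
    have h2 : (q ^ ε') ^ N = ((q:ℝ) ^ N) ^ ε' := by
      rw [← Real.rpow_natCast (q ^ ε') N, ← Real.rpow_mul hq0.le,
          mul_comm, Real.rpow_mul hq0.le, Real.rpow_natCast]
    have h3 : ((q:ℝ) ^ N) ^ ε' ≤ (q * (R / r)) ^ ε' :=
      Real.rpow_le_rpow (by positivity) hqN2 (by linarith)
    have h4 : (q * (R / r)) ^ ε' = q ^ ε' * (R / r) ^ ε' :=
      Real.mul_rpow hq0.le (by positivity)
    calc M ^ N ≤ (q ^ ε') ^ N := h1
      _ = ((q:ℝ) ^ N) ^ ε' := h2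
      _ ≤ (q * (R / r)) ^ ε' := h3
      _ = q ^ ε' * (R / r) ^ ε' := h4
  have hMNpos : (0:ℝ) < M ^ N := pow_pos hM0 N
  have hKdiv : K / (M - 1) ≤ K / ((2:ℝ) ^ ε - 1) := by
    gcongr
  calc A r ≤ M ^ N * A R + K * ∑ j ∈ Finset.range N, M ^ j := hmain
    _ ≤ M ^ N * A R + K * (M ^ N / (M - 1)) :=
        add_le_add_right (mul_le_mul_of_nonneg_left hgeom hK0) _
    _ = M ^ N * (A R + K / (M - 1)) := by field_simp
    _ ≤ M ^ N * (A R + K / ((2:ℝ) ^ ε - 1)) := by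
        apply mul_le_mul_of_nonneg_left _ hMNpos.le
        linarith
    _ ≤ M ^ N * (Cmax * (A R + R * S)) := by
        apply mul_le_mul_of_nonneg_left _ hMNpos.le
        have h5 : K / ((2:ℝ) ^ ε - 1)
            = (C₁ * q ^ γ / ((2:ℝ) ^ ε - 1)) * (R * S) := by
          rw [hK_def]; ring
        have h6 : (C₁ * q ^ γ / ((2:ℝ) ^ ε - 1)) * (R * S) ≤ Cmax * (R * S) :=
          mul_le_mul_of_nonneg_right hCmax2 (by positivity)
        have h7 : A R ≤ Cmax * A R := le_mul_of_one_le_left hAR0 hCmax1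
        calc A R + K / ((2:ℝ) ^ ε - 1)
            ≤ Cmax * A R + Cmax * (R * S) := by rw [h5]; exact add_le_add h7 h6
          _ = Cmax * (A R + R * S) := by ring
    _ ≤ (q ^ ε' * (R / r) ^ ε') * (Cmax * (A R + R * S)) := by
        apply mul_le_mul_of_nonneg_right hMN
        exact mul_nonneg (le_trans zero_le_one hCmax1)
          (add_nonneg hAR0 (mul_nonneg hR0.le hS0))
    _ = q ^ ε' * Cmax * (R / r) ^ ε' * (A R + R * S) := by ring
end

section
/- Let (X,μ) be a measure space, let B ⊆ X be measurable with 0 < μ(B) < ∞, let p ∈ [1,∞), and let f ∈ L^p(B,μ). Set N = { x ∈ B : f(x) = 0 } and assume μ(N) > 0. Then (∫_B |f|^p dμ)^{1/p} ≤ C_p · (μ(B)/μ(N)) · (∫_B |f − ⨍_B f dμ|^p dμ)^{1/p}, where C_p is a constant depending only on p (one may take C_p comparable to p). (This is the inequality proved in Appendix A of the paper to deduce the modified Poincaré inequality (P̃_{2−ε}) from (P_{2−ε}); its proof uses the elementary inequality 1 − (1−x)^{1/p} ≥ x/p for x ∈ [0,1] and p ≥ 1.) -/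
open MeasureTheory
open scoped ENNReal

/-- The inequality of Appendix A used to deduce `(P̃_{2−ε})` from `(P_{2−ε})`:
on a measure space, if `B` has finite positive measure, `f ∈ L^p(B)` and the
zero set `N = {x ∈ B : f(x) = 0}` has positive measure, then
`(∫_B |f|^p)^{1/p} ≤ C_p (μ(B)/μ(N)) (∫_B |f − ⨍_B f|^p)^{1/p}`
with `C_p` depending only on `p`. -/
theorem norm_le_oscillation_of_vanishes
    {X : Type*} [MeasurableSpace X] (μ : Measure X) (p : ℝ) (hp : 1 ≤ p) :
    ∃ C : ℝ, 0 < C ∧ ∀ (B : Set X) (f : X → ℝ),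
      MeasurableSet B → 0 < μ B → μ B < ⊤ →
      MemLp f (ENNReal.ofReal p) (μ.restrict B) →
      0 < μ {x ∈ B | f x = 0} →
      (∫ x in B, |f x| ^ p ∂μ) ^ (1 / p) ≤
        C * ((μ B).toReal / (μ {x ∈ B | f x = 0}).toReal) *
          (∫ x in B, |f x - ⨍ y in B, f y ∂μ| ^ p ∂μ) ^ (1 / p) := by
  refine ⟨2, by norm_num, fun B f hB hB0 hBfin hf hN0 => ?_⟩
  set c : ℝ := ⨍ y in B, f y ∂μ with hc
  set N : Set X := {x ∈ B | f x = 0} with hNdef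
  set ν : Measure X := μ.restrict B with hν
  have hp0 : 0 < p := lt_of_lt_of_le one_pos hp
  set q : ℝ≥0∞ := ENNReal.ofReal p with hq
  have hq0 : q ≠ 0 := by simp [hq, ENNReal.ofReal_eq_zero, not_le, hp0]
  have hqt : q ≠ ∞ := ENNReal.ofReal_ne_top
  have hqr : q.toReal = p := ENNReal.toReal_ofReal hp0.le
  have hq1 : 1 ≤ q := by
    rw [hq, ← ENNReal.ofReal_one]; exact ENNReal.ofReal_le_ofReal hp
  have hνB : ν Set.univ = μ B := by simp [hν]
  have hfin : IsFiniteMeasure ν := ⟨by rw [hνB]; exact hBfin⟩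
  have hν0 : ν ≠ 0 := by
    rw [hν, Ne, Measure.restrict_eq_zero]; exact hB0.ne'
  -- Memℒp of f - c
  have hconst : MemLp (fun _ : X => c) q ν := memLp_const c
  have hfc : MemLp (fun x => f x - c) q ν := hf.sub hconst
  -- N ⊆ B, μ N ≤ μ B
  have hNB : N ⊆ B := fun x hx => hx.1
  have hNle : μ N ≤ μ B := measure_mono hNB
  have hNt : μ N ≠ ∞ := (lt_of_le_of_lt hNle hBfin).ne
  have hNν : μ N ≤ ν {x | (‖c‖₊ : ℝ≥0∞) ^ p ≤ (‖f x - c‖₊ : ℝ≥0∞) ^ p} := by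
    rw [hν, Measure.restrict_apply' hB]
    refine measure_mono fun x hx => ⟨?_, hx.1⟩
    have : f x = 0 := hx.2
    simp [this]
  -- Markov step
  set D : ℝ≥0∞ := eLpNorm (fun x => f x - c) q ν with hD
  have hDlint : ∫⁻ x, (‖f x - c‖₊ : ℝ≥0∞) ^ p ∂ν = D ^ p := by
    rw [hD, eLpNorm_eq_lintegral_rpow_enorm_toReal hq0 hqt, hqr, one_div,
      ← ENNReal.rpow_mul, inv_mul_cancel₀ hp0.ne', ENNReal.rpow_one]
    simp only [enorm_eq_nnnorm]
  have key : (‖c‖₊ : ℝ≥0∞) ^ p * μ N ≤ D ^ p := by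
    refine le_trans ?_ (le_of_eq hDlint)
    calc (‖c‖₊ : ℝ≥0∞) ^ p * μ N
        ≤ (‖c‖₊ : ℝ≥0∞) ^ p * ν {x | (‖c‖₊ : ℝ≥0∞) ^ p ≤ (‖f x - c‖₊ : ℝ≥0∞) ^ p} :=
          mul_le_mul_right hNν _
      _ ≤ ∫⁻ x, (‖f x - c‖₊ : ℝ≥0∞) ^ p ∂ν :=
          mul_meas_ge_le_lintegral₀
            (hfc.aestronglyMeasurable.enorm.pow_const p) _
  have hcle : (‖c‖₊ : ℝ≥0∞) ≤ D * (μ N) ^ (-(1/p)) := by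
    have h1 : ((‖c‖₊ : ℝ≥0∞) ^ p * μ N) ^ (1/p) ≤ (D ^ p) ^ (1/p) :=
      ENNReal.rpow_le_rpow key (by positivity)
    rw [ENNReal.mul_rpow_of_nonneg _ _ (by positivity), ← ENNReal.rpow_mul,
      mul_one_div_cancel hp0.ne', ENNReal.rpow_one, ← ENNReal.rpow_mul,
      mul_one_div_cancel hp0.ne', ENNReal.rpow_one] at h1
    calc (‖c‖₊ : ℝ≥0∞) = (‖c‖₊ : ℝ≥0∞) * (μ N) ^ (1/p) * (μ N) ^ (-(1/p)) := by
          rw [mul_assoc, ← ENNReal.rpow_add _ _ (by simpa using hN0.ne') hNt]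
          simp
      _ ≤ D * (μ N) ^ (-(1/p)) := mul_le_mul_left h1 _
  -- triangle inequality
  have htri : eLpNorm f q ν ≤ D + (‖c‖₊ : ℝ≥0∞) * (μ B) ^ (1/p) := by
    have : f = (fun x => f x - c) + (fun _ => c) := by funext x; simp
    calc eLpNorm f q ν = eLpNorm ((fun x => f x - c) + fun _ => c) q ν := by rw [← this]
      _ ≤ D + eLpNorm (fun _ => c) q ν :=
          eLpNorm_add_le hfc.aestronglyMeasurable aestronglyMeasurable_const hq1
      _ = D + (‖c‖₊ : ℝ≥0∞) * (μ B) ^ (1/p) := by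
          rw [eLpNorm_const c hq0 hν0, hνB, hqr, enorm_eq_nnnorm]
  -- ratio
  set r : ℝ≥0∞ := μ B / μ N with hr
  have hr1 : 1 ≤ r := by
    rw [hr, ENNReal.le_div_iff_mul_le (Or.inl hN0.ne') (Or.inl hNt), one_mul]
    exact hNle
  have hrt : r ≠ ∞ := (ENNReal.div_lt_top hBfin.ne hN0.ne').ne
  have hbound : eLpNorm f q ν ≤ 2 * r * D := by
    calc eLpNorm f q ν ≤ D + (‖c‖₊ : ℝ≥0∞) * (μ B) ^ (1/p) := htri
      _ ≤ D + D * (μ N) ^ (-(1/p)) * (μ B) ^ (1/p) :=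
          add_le_add_right (mul_le_mul_left hcle _) _
      _ = D * (1 + r ^ (1/p)) := by
          rw [hr, ENNReal.div_rpow_of_nonneg _ _ (by positivity), ENNReal.rpow_neg,
            mul_add, mul_one, div_eq_mul_inv (μ B ^ (1/p))]
          ring
      _ ≤ D * (r + r) := by
          gcongr
          · calc r ^ (1/p) ≤ r ^ (1:ℝ) :=
                ENNReal.rpow_le_rpow_of_exponent_le hr1
                  (by rw [div_le_one hp0]; exact hp)
              _ = r := ENNReal.rpow_one r
      _ = 2 * r * D := by ring
  -- convert to real integrals
  have hfeq : eLpNorm f q ν = ENNReal.ofReal ((∫ x, |f x| ^ p ∂ν) ^ (1/p)) := by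
    rw [hf.eLpNorm_eq_integral_rpow_norm hq0 hqt, hqr, one_div]
    simp only [Real.norm_eq_abs]
  have hDeq : D = ENNReal.ofReal ((∫ x, |f x - c| ^ p ∂ν) ^ (1/p)) := by
    rw [hD, hfc.eLpNorm_eq_integral_rpow_norm hq0 hqt, hqr, one_div]
    simp only [Real.norm_eq_abs]
  have hA0 : 0 ≤ (∫ x, |f x| ^ p ∂ν) ^ (1/p) := by
    apply Real.rpow_nonneg
    exact integral_nonneg fun x => by positivity
  have hD0 : 0 ≤ (∫ x, |f x - c| ^ p ∂ν) ^ (1/p) := by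
    apply Real.rpow_nonneg
    exact integral_nonneg fun x => by positivity
  rw [hfeq, hDeq] at hbound
  have hfin2 : 2 * r * ENNReal.ofReal ((∫ x, |f x - c| ^ p ∂ν) ^ (1/p)) ≠ ∞ := by
    exact ENNReal.mul_ne_top (ENNReal.mul_ne_top (by simp) hrt) ENNReal.ofReal_ne_top
  have := ENNReal.toReal_mono hfin2 hbound
  rw [ENNReal.toReal_ofReal hA0, ENNReal.toReal_mul, ENNReal.toReal_mul,
    ENNReal.toReal_ofReal hD0, hr, ENNReal.toReal_div] at this
  simpa using this
end
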